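/- For every integer k ≥ 1, the series a_k := ∑_{n=0}^∞ (−1)^n · π^{2n} / (2^n · (2n)! · ∏_{j=1}^{k} (2n+2j−1)) converges and its sum is strictly positive. -/

import Mathlib

open Real Finset

private lemma prod_shift_aux (n k : ℕ) :
    (2*n+1) * ∏ j ∈ Finset.Icc 1 k, (2*(n+1) + 2*j - 1) =
    (∏ j ∈ Finset.Icc 1 k, (2*n + 2*j - 1)) * (2*n + 2*k + 1) := by
  induction k with
  | zero => simp
  | succ k ih =>
    rw [Finset.prod_Icc_succ_top (Nat.le_add_left 1 k),
        Finset.prod_Icc_succ_top (Nat.le_add_left 1 k)]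
    have h1 : 2*(n+1)+2*(k+1)-1 = 2*n+2*k+3 := by omega
    have h2 : 2*n+2*(k+1)-1 = 2*n+2*k+1 := by omega
    have h3 : 2*n+2*(k+1)+1 = 2*n+2*k+3 := by omega
    rw [h1, h2, h3]
    calc (2*n+1) * ((∏ j ∈ Finset.Icc 1 k, (2*(n+1) + 2*j - 1)) * (2*n+2*k+3))
        = ((2*n+1) * ∏ j ∈ Finset.Icc 1 k, (2*(n+1) + 2*j - 1)) * (2*n+2*k+3) := by ring
      _ = ((∏ j ∈ Finset.Icc 1 k, (2*n + 2*j - 1)) * (2*n+2*k+1)) * (2*n+2*k+3) := by rw [ih]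
      _ = _ := by ring

theorem series_a_k_pos (k : ℕ) (hk : 1 ≤ k) :
    Summable (fun n : ℕ =>
      (-1 : ℝ) ^ n * Real.pi ^ (2 * n) /
        (2 ^ n * (Nat.factorial (2 * n)) *
          ∏ j ∈ Finset.Icc 1 k, ((2 * n + 2 * j - 1 : ℕ) : ℝ))) ∧
    0 < ∑' n : ℕ,
      (-1 : ℝ) ^ n * Real.pi ^ (2 * n) /
        (2 ^ n * (Nat.factorial (2 * n)) *
          ∏ j ∈ Finset.Icc 1 k, ((2 * n + 2 * j - 1 : ℕ) : ℝ)) := by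
  -- the natural-number denominator
  set D : ℕ → ℕ := fun n => 2 ^ n * Nat.factorial (2 * n) *
      ∏ j ∈ Finset.Icc 1 k, (2 * n + 2 * j - 1) with hD
  have hDpos : ∀ n, 0 < D n := by
    intro n
    refine Nat.mul_pos (Nat.mul_pos (pow_pos (by norm_num : (0:ℕ) < 2) _) (Nat.factorial_pos _)) ?_
    refine Finset.prod_pos ?_
    intro j hj
    have : 1 ≤ j := (Finset.mem_Icc.mp hj).1
    omega
  -- D recursion
  have hDrec : ∀ n, (2*n+1) * D (n+1) = (2*n+1) * (D n * (2*(2*n+2)*(2*n+2*k+1))) := by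
    intro n
    have hfac : Nat.factorial (2*(n+1)) = Nat.factorial (2*n) * ((2*n+1)*(2*n+2)) := by
      have : 2*(n+1) = (2*n+1)+1 := by ring
      rw [this, Nat.factorial_succ, show 2*n+1 = (2*n)+1 from rfl, Nat.factorial_succ]
      ring
    have hp := prod_shift_aux n k
    calc (2*n+1) * D (n+1)
        = 2^(n+1) * Nat.factorial (2*(n+1)) *
            ((2*n+1) * ∏ j ∈ Finset.Icc 1 k, (2*(n+1) + 2*j - 1)) := by
          simp only [hD]; ring
      _ = 2^(n+1) * Nat.factorial (2*(n+1)) *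
            ((∏ j ∈ Finset.Icc 1 k, (2*n + 2*j - 1)) * (2*n+2*k+1)) := by rw [hp]
      _ = (2*n+1) * (D n * (2*(2*n+2)*(2*n+2*k+1))) := by
          simp only [hD, hfac, pow_succ]; ring
  have hDrec' : ∀ n, D (n+1) = D n * (2*(2*n+2)*(2*n+2*k+1)) := by
    intro n
    exact Nat.eq_of_mul_eq_mul_left (by omega) (hDrec n)
  -- the real-valued absolute term
  set g : ℕ → ℝ := fun n => Real.pi ^ (2*n) / (D n : ℝ) with hg
  have hgpos : ∀ n, 0 < g n := by
    intro n
    exact div_pos (pow_pos Real.pi_pos _) (by exact_mod_cast hDpos n)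
  have hpi2 : Real.pi ^ 2 < 10 := by
    nlinarith [Real.pi_lt_d2, Real.pi_pos]
  -- ratio bound
  have hratio : ∀ n, g (n+1) ≤ (5/6) * g n := by
    intro n
    have hc : (12 : ℝ) ≤ (2*(2*n+2)*(2*n+2*k+1) : ℕ) := by
      have : (12 : ℕ) ≤ 2*(2*n+2)*(2*n+2*k+1) := by nlinarith [hk]
      exact_mod_cast this
    have hDn : (0:ℝ) < (D n : ℝ) := by exact_mod_cast hDpos n
    have hcpos : (0:ℝ) < (2*(2*n+2)*(2*n+2*k+1) : ℕ) := by linarith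
    have hgrec : g (n+1) = g n * (Real.pi ^ 2 / (2*(2*n+2)*(2*n+2*k+1) : ℕ)) := by
      simp only [hg, hDrec' n]
      push_cast
      rw [show 2*(n+1) = 2*n+2 from by ring, pow_add]
      field_simp
    rw [hgrec]
    have h1 : Real.pi ^ 2 / (2*(2*n+2)*(2*n+2*k+1) : ℕ) ≤ 10/12 := by
      rw [div_le_div_iff₀ hcpos (by norm_num)]
      nlinarith [Real.pi_pos]
    calc g n * (Real.pi ^ 2 / (2*(2*n+2)*(2*n+2*k+1) : ℕ))
        ≤ g n * (10/12) := by
          exact mul_le_mul_of_nonneg_left h1 (le_of_lt (hgpos n))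
      _ = (5/6) * g n := by ring
  -- the signed term
  set f : ℕ → ℝ := fun n => (-1:ℝ)^n * g n with hf
  have hfeq : (fun n : ℕ =>
      (-1 : ℝ) ^ n * Real.pi ^ (2 * n) /
        (2 ^ n * (Nat.factorial (2 * n)) *
          ∏ j ∈ Finset.Icc 1 k, ((2 * n + 2 * j - 1 : ℕ) : ℝ))) = f := by
    funext n
    simp only [hf, hg, hD]
    push_cast
    ring
  have hnorm : ∀ n, ‖f n‖ = g n := by
    intro n
    simp only [hf, norm_mul, norm_pow, norm_neg, norm_one, one_pow, one_mul]
    exact Real.norm_of_nonneg (le_of_lt (hgpos n))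
  have hsum : Summable f := by
    apply summable_of_ratio_norm_eventually_le (r := 5/6) (by norm_num)
    filter_upwards with n
    rw [hnorm, hnorm]
    exact hratio n
  rw [hfeq]
  refine ⟨hsum, ?_⟩
  -- positivity via pairing
  have heven : Summable (fun m : ℕ => f (2*m)) :=
    hsum.comp_injective (fun a b h => by omega)
  have hodd : Summable (fun m : ℕ => f (2*m+1)) :=
    hsum.comp_injective (fun a b h => by omega)
  have hpair := tsum_even_add_odd heven hodd
  rw [← hpair, ← Summable.tsum_add heven hodd]
  have hpairpos : ∀ m, 0 < f (2*m) + f (2*m+1) := by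
    intro m
    have h1 : f (2*m) = g (2*m) := by
      simp [hf, pow_mul]
    have h2 : f (2*m+1) = - g (2*m+1) := by
      simp [hf, pow_succ, pow_mul]
    rw [h1, h2]
    have := hratio (2*m)
    have := hgpos (2*m)
    have := hgpos (2*m+1)
    linarith
  exact Summable.tsum_pos (heven.add hodd) (fun m => le_of_lt (hpairpos m)) 0 (hpairpos 0)
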